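/- arXiv:1611.07224 — 2 statements merged into one kernel-verified Lean document; each statement's English description precedes it below -/
import Mathlib

section
/- Let $N_t \geq 2$ and $B_f \geq 0$ be integers and $\rho > 0$ a real number. Let $X_1, \dots, X_{2^{B_f}}$ be independent identically distributed real random variables, each with cumulative distribution function $F(x) = 1 - (1-x)^{N_t - 1}$ for $x \in [0,1]$. Then $\rho N_t\, \mathbb{E}\big[\min_{1 \le i \le 2^{B_f}} X_i\big] \le \dfrac{\rho N_t}{N_t - 1}\,2^{-B_f}$. -/
open MeasureTheory ProbabilityTheory

/-- Corollary 1 of the paper (interference upper bound under perfect CSI exchange):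
`ρ N_t · 𝔼[min of 2^{B_f} i.i.d. Beta(1, N_t-1) variables] ≤ ρ N_t/(N_t-1) · 2^{-B_f}`. -/
theorem stmt_4
    {Ω : Type*} [MeasurableSpace Ω] (μ : Measure Ω) [IsProbabilityMeasure μ]
    (Nt Bf : ℕ) (hNt : 2 ≤ Nt) (ρ : ℝ) (hρ : 0 < ρ)
    (X : Fin (2 ^ Bf) → Ω → ℝ)
    (hmeas : ∀ i, Measurable (X i))
    (hindep : iIndepFun X μ)
    (hcdf : ∀ i : Fin (2 ^ Bf), ∀ x : ℝ,
      μ {ω | X i ω ≤ x} = ENNReal.ofReal (1 - (1 - min (max x 0) 1) ^ (Nt - 1))) :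
    ρ * Nt * ∫ ω, (⨅ i, X i ω) ∂μ ≤ ρ * Nt / ((Nt : ℝ) - 1) * (2 : ℝ) ^ (-(Bf : ℝ)) := by
  classical
  have hnpos : 0 < 2 ^ Bf := Nat.pow_pos (by norm_num)
  haveI : Nonempty (Fin (2 ^ Bf)) := ⟨⟨0, hnpos⟩⟩
  have hβ1 : 1 ≤ Nt - 1 := by omega
  set Y : Ω → ℝ := fun ω => ⨅ i, X i ω with hY
  have hbdd : ∀ ω, BddBelow (Set.range fun i => X i ω) :=
    fun ω => (Set.finite_range _).bddBelow
  have hYmeas : Measurable Y := Measurable.iInf hmeas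
  -- a.s. upper bound by 1
  have h1 : ∀ i, μ {ω | 1 < X i ω} = 0 := by
    intro i
    have h := hcdf i 1
    norm_num at h
    rw [zero_pow (by omega : Nt - 1 ≠ 0)] at h
    norm_num at h
    have hc : {ω | 1 < X i ω} = {ω | X i ω ≤ 1}ᶜ := by
      ext ω; simp [not_le]
    rw [hc, measure_compl (measurableSet_le (hmeas i) measurable_const) (measure_ne_top μ _), h]
    simp
  -- a.s. lower bound by 0
  have h0 : ∀ i, μ {ω | X i ω < 0} = 0 := by
    intro i
    have hsub : {ω | X i ω < 0} ⊆ ⋃ k : ℕ, {ω | X i ω ≤ -(1 / (k + 1))} := by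
      intro ω hω
      obtain ⟨k, hk⟩ := exists_nat_gt (1 / (-(X i ω)))
      refine Set.mem_iUnion.2 ⟨k, ?_⟩
      have hx : 0 < -(X i ω) := by simpa using hω
      have hk1 : 1 / (-(X i ω)) < (k : ℝ) + 1 := hk.trans (by linarith)
      have h2 := (div_lt_iff₀ hx).mp hk1
      have hkpos : (0:ℝ) < (k:ℝ) + 1 := by positivity
      simp only [Set.mem_setOf_eq]
      rw [le_neg, div_le_iff₀ hkpos]
      linarith
    refine measure_mono_null hsub (measure_iUnion_null fun k => ?_)
    have h := hcdf i (-(1 / (k + 1)))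
    have hneg : -(1 / ((k:ℝ) + 1)) ≤ 0 := by
      have : (0:ℝ) ≤ 1 / ((k:ℝ) + 1) := by positivity
      linarith
    rw [h, max_eq_right hneg, min_eq_left zero_le_one]
    simp
  -- Y in [0,1] a.e.
  have hY0 : 0 ≤ᵐ[μ] Y := by
    have hall : ∀ᵐ ω ∂μ, ∀ i, 0 ≤ X i ω := by
      rw [ae_all_iff]
      intro i
      have he : {ω | ¬ 0 ≤ X i ω} = {ω | X i ω < 0} := by ext ω; simp [not_le]
      rw [ae_iff, he]
      exact h0 i
    filter_upwards [hall] with ω hω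
    exact le_ciInf fun i => hω i
  have hY1 : ∀ᵐ ω ∂μ, Y ω ≤ 1 := by
    have i0 : Fin (2 ^ Bf) := ⟨0, hnpos⟩
    have hh : ∀ᵐ ω ∂μ, X i0 ω ≤ 1 := by
      rw [ae_iff]
      have he : {ω | ¬ X i0 ω ≤ 1} = {ω | 1 < X i0 ω} := by ext ω; simp [not_le]
      rw [he]; exact h1 i0
    filter_upwards [hh] with ω hω
    exact (ciInf_le (hbdd ω) i0).trans hω
  -- integrability
  have hYint : Integrable Y μ := by
    refine Integrable.mono' (integrable_const 1) hYmeas.aestronglyMeasurable ?_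
    filter_upwards [hY0, hY1] with ω h0' h1'
    simp only [Pi.zero_apply] at h0'
    rw [Real.norm_eq_abs, abs_le]
    constructor <;> linarith
  -- layer cake
  have hlc : ∫ ω, Y ω ∂μ = ∫ t in Set.Ioi (0:ℝ), (μ {a | t < Y a}).toReal :=
    hYint.integral_eq_integral_meas_lt hY0
  set k : ℕ := (Nt - 1) * 2 ^ Bf with hk
  have hkpos : 0 < k := Nat.mul_pos (by omega) hnpos
  set g : ℝ → ℝ := Set.indicator (Set.Ioo (0:ℝ) 1) (fun t => (1 - t) ^ k) with hg
  -- pointwise bound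
  have key : ∀ t ∈ Set.Ioi (0:ℝ), (μ {a | t < Y a}).toReal ≤ g t := by
    intro t ht
    simp only [Set.mem_Ioi] at ht
    by_cases ht1 : t < 1
    · -- equality case
      have hset : {a | t < Y a} = ⋂ i, {a | t < X i a} := by
        ext a
        simp only [Set.mem_setOf_eq, Set.mem_iInter]
        constructor
        · intro h i
          exact h.trans_le (ciInf_le (hbdd a) i)
        · intro h
          obtain ⟨i0, hi0⟩ := Finite.exists_min (fun i => X i a)
          have : Y a = X i0 a :=
            le_antisymm (ciInf_le (hbdd a) i0) (le_ciInf hi0)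
          exact lt_of_lt_of_eq (h i0) this.symm
      have hfac : μ (⋂ i, {a | t < X i a}) = ∏ i : Fin (2 ^ Bf), μ {a | t < X i a} :=
        hindep.meas_iInter (fun i => ⟨Set.Ioi t, measurableSet_Ioi, rfl⟩)
      have hone : ∀ i, μ {a | t < X i a} = ENNReal.ofReal ((1 - t) ^ (Nt - 1)) := by
        intro i
        have hc : {a | t < X i a} = {a | X i a ≤ t}ᶜ := by ext a; simp [not_le]
        have hcdf' := hcdf i t
        rw [max_eq_left ht.le, min_eq_left ht1.le] at hcdf'
        rw [hc, measure_compl (measurableSet_le (hmeas i) measurable_const) (measure_ne_top μ _),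
          hcdf', measure_univ]
        have hb0 : (0:ℝ) ≤ (1 - t) ^ (Nt - 1) := pow_nonneg (by linarith) _
        rw [ENNReal.ofReal_sub _ hb0, ENNReal.ofReal_one]
        rw [ENNReal.sub_sub_cancel (by norm_num)]
        exact ENNReal.ofReal_le_one.mpr (pow_le_one₀ (by linarith) (by linarith))
      have hb1 : (0:ℝ) ≤ 1 - t := by linarith
      have hb0 : (0:ℝ) ≤ (1 - t) ^ (Nt - 1) := pow_nonneg hb1 _
      rw [hset, hfac]
      have : ∏ i : Fin (2 ^ Bf), μ {a | t < X i a}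
          = ENNReal.ofReal ((1 - t) ^ k) := by
        simp only [hone]
        rw [Finset.prod_const, Finset.card_univ, Fintype.card_fin,
          ← ENNReal.ofReal_pow hb0, ← pow_mul, ← hk]
      rw [this, ENNReal.toReal_ofReal (pow_nonneg hb1 _), hg,
        Set.indicator_of_mem (Set.mem_Ioo.mpr ⟨ht, ht1⟩) _]
    · -- t ≥ 1
      push_neg at ht1
      have hgt : g t = 0 := by
        rw [hg, Set.indicator_of_notMem]
        simp only [Set.mem_Ioo, not_and, not_lt]
        intro; exact ht1
      rw [hgt]
      have i0 : Fin (2 ^ Bf) := ⟨0, hnpos⟩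
      have hsub : {a | t < Y a} ⊆ {a | 1 < X i0 a} := by
        intro a ha
        simp only [Set.mem_setOf_eq] at ha ⊢
        exact lt_of_lt_of_le (lt_of_le_of_lt ht1 ha) (ciInf_le (hbdd a) i0)
      have := measure_mono_null hsub (h1 i0)
      simp [this]
  -- integrability of g
  have hgint : Integrable g (volume.restrict (Set.Ioi (0:ℝ))) := by
    have hcont : Continuous fun t : ℝ => (1 - t) ^ k :=
      (continuous_const.sub continuous_id).pow k
    have hio : IntegrableOn (fun t : ℝ => (1 - t) ^ k) (Set.Ioo (0:ℝ) 1) :=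
      (hcont.integrableOn_Icc (a := 0) (b := 1)).mono_set Set.Ioo_subset_Icc_self
    exact ((hio.integrable_indicator measurableSet_Ioo).restrict)
  have hmono : ∫ t in Set.Ioi (0:ℝ), (μ {a | t < Y a}).toReal ≤ ∫ t in Set.Ioi (0:ℝ), g t := by
    refine integral_mono_of_nonneg (ae_of_all _ fun t => ENNReal.toReal_nonneg) hgint ?_
    exact (ae_restrict_iff' measurableSet_Ioi).2 (ae_of_all _ key)
  have hgval : ∫ t in Set.Ioi (0:ℝ), g t = 1 / ((k:ℝ) + 1) := by
    rw [hg, integral_indicator measurableSet_Ioo, Measure.restrict_restrict measurableSet_Ioo,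
      Set.inter_eq_self_of_subset_left Set.Ioo_subset_Ioi_self,
      ← MeasureTheory.integral_Ioc_eq_integral_Ioo,
      ← intervalIntegral.integral_of_le zero_le_one,
      intervalIntegral.integral_comp_sub_left (fun x => x ^ k) 1]
    norm_num [integral_pow]
  have hE : ∫ ω, Y ω ∂μ ≤ 1 / ((k:ℝ) + 1) := by
    rw [hlc]
    exact hmono.trans_eq hgval
  have hk' : (k:ℝ) = ((Nt:ℝ) - 1) * 2 ^ Bf := by
    rw [hk]
    push_cast [Nat.cast_sub (by omega : 1 ≤ Nt)]
    ring
  have hNt1 : (0:ℝ) < (Nt:ℝ) - 1 := by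
    have : (2:ℝ) ≤ Nt := by exact_mod_cast hNt
    linarith
  have hkpos' : (0:ℝ) < (k:ℝ) := by exact_mod_cast hkpos
  have hρNt : (0:ℝ) ≤ ρ * Nt := by positivity
  have h2Bf : (0:ℝ) < (2:ℝ) ^ Bf := by positivity
  have hrhs : ρ * Nt / ((Nt:ℝ) - 1) * (2:ℝ) ^ (-(Bf:ℝ)) = ρ * Nt * (1 / (k:ℝ)) := by
    have h2 : (2:ℝ) ^ (-(Bf:ℝ)) = ((2:ℝ) ^ (Bf:ℕ))⁻¹ := by
      rw [Real.rpow_neg (by norm_num : (0:ℝ) ≤ 2), Real.rpow_natCast]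
    rw [h2, hk']
    field_simp
  rw [hrhs]
  calc ρ * ↑Nt * ∫ ω, Y ω ∂μ ≤ ρ * ↑Nt * (1 / ((k:ℝ) + 1)) :=
        mul_le_mul_of_nonneg_left hE hρNt
    _ ≤ ρ * ↑Nt * (1 / (k:ℝ)) :=
        mul_le_mul_of_nonneg_left (one_div_le_one_div_of_le hkpos' (by linarith)) hρNt
end

section
/- Define $\Phi(K) = \Gamma\!\big(\tfrac{K}{K-1}\big)\,\Gamma(K)^{-\frac{1}{K-1}}$ for integers $K \geq 2$, where $\Gamma$ is the Gamma function. Then (a) $\Phi(K) \le 1$ for every integer $K \geq 2$, and (b) $\Phi$ is decreasing: $\Phi(K+1) \le \Phi(K)$ for every integer $K \geq 2$. -/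
open Real Set

/-- The coefficient `Φ(K) = Γ(K/(K-1)) Γ(K)^{-1/(K-1)}` of Theorem 3. -/
noncomputable def Phi (K : ℕ) : ℝ :=
  Real.Gamma ((K : ℝ) / ((K : ℝ) - 1)) * Real.Gamma (K : ℝ) ^ (-(1 / ((K : ℝ) - 1)))

lemma logGamma_nonpos {x : ℝ} (h0 : 0 ≤ x) (h1 : x ≤ 1) :
    Real.log (Real.Gamma (1 + x)) ≤ 0 := by
  have h := Real.convexOn_log_Gamma.2 (show (1:ℝ) ∈ Ioi 0 by norm_num)
    (show (2:ℝ) ∈ Ioi 0 by norm_num) (by linarith : (0:ℝ) ≤ 1 - x) h0 (by ring)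
  simp only [smul_eq_mul, Function.comp_apply, Real.Gamma_one, Real.Gamma_two,
    Real.log_one] at h
  have harg : (1 - x) * 1 + x * 2 = 1 + x := by ring
  rw [harg] at h
  linarith

lemma logGamma_ge {x : ℝ} (h0 : 0 ≤ x) :
    -(x * Real.log π) ≤ Real.log (Real.Gamma (1 + x)) := by
  have hd : (0:ℝ) < 1 + 2 * x := by linarith
  have h := Real.convexOn_log_Gamma.2 (show (1/2:ℝ) ∈ Ioi 0 by norm_num)
    (Set.mem_Ioi.mpr (by linarith : (0:ℝ) < 1 + x))
    (show (0:ℝ) ≤ 2*x/(1+2*x) by positivity)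
    (show (0:ℝ) ≤ 1/(1+2*x) by positivity)
    (by field_simp; ring)
  simp only [smul_eq_mul, Function.comp_apply] at h
  have harg : 2*x/(1+2*x) * (1/2) + 1/(1+2*x) * (1 + x) = 1 := by field_simp; ring
  rw [harg, Real.Gamma_one, Real.log_one, Real.Gamma_one_half_eq,
    Real.log_sqrt Real.pi_nonneg] at h
  have h2 := mul_le_mul_of_nonneg_left h hd.le
  rw [mul_zero] at h2
  have e : (1+2*x) * (2*x/(1+2*x) * (Real.log π / 2) + 1/(1+2*x) * Real.log (Real.Gamma (1+x)))
      = x * Real.log π + Real.log (Real.Gamma (1+x)) := by field_simp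
  rw [e] at h2
  linarith

lemma fact_bound : ∀ n : ℕ, 2 ≤ n → Nat.factorial n ≤ 2 * (n+1)^(n-2) := by
  intro n hn
  induction n, hn using Nat.le_induction with
  | base => norm_num [Nat.factorial]
  | succ n hn ih =>
    have h1 : Nat.factorial (n+1) = (n+1) * Nat.factorial n := Nat.factorial_succ n
    have h2 : (n+1) * (2 * (n+1)^(n-2)) = 2 * (n+1)^(n-1) := by
      rw [mul_left_comm]
      congr 1
      rw [← pow_succ']
      congr 1
      omega
    have h3 : (2:ℕ) * (n+1)^(n-1) ≤ 2 * (n+2)^(n-1) :=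
      Nat.mul_le_mul_left 2 (Nat.pow_le_pow_left (by omega) _)
    have h4 : n + 1 - 2 = n - 1 := by omega
    calc Nat.factorial (n+1) = (n+1) * Nat.factorial n := h1
      _ ≤ (n+1) * (2 * (n+1)^(n-2)) := Nat.mul_le_mul_left _ ih
      _ = 2 * (n+1)^(n-1) := h2
      _ ≤ 2 * (n+2)^(n-1) := h3
      _ = 2 * (n+1+1)^(n+1-2) := by rw [h4]

lemma Phi_eq (n : ℕ) (hn : 1 ≤ n) :
    Phi (n+1) = Real.exp (Real.log (Real.Gamma (1 + 1/(n:ℝ)))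
      - (1/(n:ℝ)) * Real.log ((Nat.factorial n : ℝ))) := by
  have hm : (0:ℝ) < n := by exact_mod_cast hn
  have hc : ((n+1 : ℕ) : ℝ) = (n:ℝ) + 1 := by push_cast; ring
  unfold Phi
  rw [hc]
  have e1 : ((n:ℝ)+1)/(((n:ℝ)+1)-1) = 1 + 1/(n:ℝ) := by
    rw [add_sub_cancel_right, add_div, div_self hm.ne']
  have e2 : Real.Gamma ((n:ℝ)+1) = (Nat.factorial n : ℝ) := Real.Gamma_nat_eq_factorial n
  rw [e1, e2]
  have hg : (0:ℝ) < Real.Gamma (1 + 1/(n:ℝ)) := Real.Gamma_pos_of_pos (by positivity)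
  have hf : (0:ℝ) < (Nat.factorial n : ℝ) := by exact_mod_cast (Nat.factorial_pos n)
  symm
  rw [Real.exp_sub, Real.exp_log hg, div_eq_mul_inv, ← Real.exp_neg,
    Real.rpow_def_of_pos hf]
  congr 1
  ring

lemma Phi_le_one (n : ℕ) (hn : 1 ≤ n) : Phi (n+1) ≤ 1 := by
  have hm : (0:ℝ) < n := by exact_mod_cast hn
  have hm1 : (1:ℝ) ≤ n := by exact_mod_cast hn
  rw [Phi_eq n hn, Real.exp_le_one_iff]
  have hg : Real.log (Real.Gamma (1 + 1/(n:ℝ))) ≤ 0 :=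
    logGamma_nonpos (by positivity) (by rw [div_le_one hm]; exact hm1)
  have hL : 0 ≤ Real.log ((Nat.factorial n : ℝ)) :=
    Real.log_nonneg (by exact_mod_cast (Nat.factorial_pos n))
  have : 0 ≤ (1/(n:ℝ)) * Real.log ((Nat.factorial n : ℝ)) := by positivity
  linarith

lemma key (n : ℕ) (hn : 2 ≤ n) :
    Real.log (Real.Gamma (1 + 1/((n+1 : ℕ):ℝ))) - (1/((n+1 : ℕ):ℝ)) * Real.log ((Nat.factorial (n+1) : ℝ))
      ≤ Real.log (Real.Gamma (1 + 1/(n:ℝ))) - (1/(n:ℝ)) * Real.log ((Nat.factorial n : ℝ)) := by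
  push_cast [Nat.factorial_succ]
  rw [Real.log_mul (by positivity) (by exact_mod_cast (Nat.factorial_pos n).ne')]
  set m : ℝ := (n:ℝ) with hmdef
  have hm2 : (2:ℝ) ≤ m := by rw [hmdef]; exact_mod_cast hn
  have hm0 : (0:ℝ) < m := by linarith
  have hm1 : (0:ℝ) < m + 1 := by linarith
  set a : ℝ := Real.log (Real.Gamma (1 + 1/(m+1))) with ha
  set g : ℝ := Real.log (Real.Gamma (1 + 1/m)) with hgdef
  set L : ℝ := Real.log ((Nat.factorial n : ℝ)) with hL
  -- chord inequality: (m+1) a ≤ m g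
  have hA : (m+1) * a ≤ m * g := by
    have h := Real.convexOn_log_Gamma.2 (show (1:ℝ) ∈ Ioi 0 by norm_num)
      (Set.mem_Ioi.mpr (by positivity : (0:ℝ) < 1 + 1/m))
      (show (0:ℝ) ≤ 1/(m+1) by positivity)
      (show (0:ℝ) ≤ m/(m+1) by positivity)
      (by field_simp; ring)
    simp only [smul_eq_mul, Function.comp_apply] at h
    have harg : 1/(m+1) * 1 + m/(m+1) * (1 + 1/m) = 1 + 1/(m+1) := by
      field_simp; ring
    rw [harg, Real.Gamma_one, Real.log_one] at h
    have h2 := mul_le_mul_of_nonneg_left h hm1.le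
    have e : (m+1) * (1/(m+1) * 0 + m/(m+1) * g) = m * g := by field_simp; ring
    rw [e] at h2
    exact h2
  -- lower bound: -log π ≤ m g
  have hB : -Real.log π ≤ m * g := by
    have h := logGamma_ge (show (0:ℝ) ≤ 1/m by positivity)
    have h2 := mul_le_mul_of_nonneg_left h hm0.le
    have e : m * -(1/m * Real.log π) = -Real.log π := by field_simp
    rw [e] at h2
    exact h2
  -- factorial bound: L ≤ log 2 + (m-2) log (m+1)
  have hF : L ≤ Real.log 2 + (m - 2) * Real.log (m+1) := by
    have hnat := fact_bound n hn
    have hcast : (Nat.factorial n : ℝ) ≤ 2 * (m+1)^((n-2 : ℕ)) := by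
      rw [hmdef]
      exact_mod_cast hnat
    have hlog := Real.log_le_log (by exact_mod_cast (Nat.factorial_pos n)) hcast
    rw [Real.log_mul (by norm_num) (by positivity), Real.log_pow] at hlog
    have : ((n - 2 : ℕ) : ℝ) = m - 2 := by
      rw [hmdef]; push_cast [Nat.cast_sub hn]; ring
    rw [this] at hlog
    exact hlog
  -- pi bound: log π ≤ 2 log (m+1) - log 2
  have hP : Real.log π ≤ 2 * Real.log (m+1) - Real.log 2 := by
    have h92 : π ≤ (m+1)^(2:ℕ) / 2 := by
      have := Real.pi_le_four
      nlinarith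
    have := Real.log_le_log Real.pi_pos h92
    rw [Real.log_div (by positivity) (by norm_num), Real.log_pow] at this
    push_cast at this
    linarith
  -- scaled inequality
  have key2 : m*(m+1)*a - m*(Real.log (m+1) + L) ≤ m*(m+1)*g - (m+1)*L := by
    have hA2 := mul_le_mul_of_nonneg_left hA hm0.le
    nlinarith
  have h2 : (a - 1/(m+1) * (Real.log (m+1) + L)) * (m*(m+1))
      ≤ (g - 1/m * L) * (m*(m+1)) := by
    have e1 : (a - 1/(m+1) * (Real.log (m+1) + L)) * (m*(m+1))
        = m*(m+1)*a - m*(Real.log (m+1) + L) := by field_simp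
    have e2 : (g - 1/m * L) * (m*(m+1)) = m*(m+1)*g - (m+1)*L := by field_simp
    rw [e1, e2]; exact key2
  exact le_of_mul_le_mul_right h2 (by positivity)

/-- `Φ(K) ≤ 1` for every integer `K ≥ 2`, and `Φ` is decreasing in `K`. -/
theorem stmt_10 :
    ∀ K : ℕ, 2 ≤ K → Phi K ≤ 1 ∧ Phi (K + 1) ≤ Phi K := by
  intro K hK
  obtain ⟨n, rfl⟩ : ∃ n, K = n + 1 := ⟨K - 1, by omega⟩
  have hn : 1 ≤ n := by omega
  refine ⟨Phi_le_one n hn, ?_⟩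
  rcases eq_or_lt_of_le hn with h1 | h2
  · -- n = 1 : Phi 2 = 1, Phi 3 ≤ 1
    subst h1
    have h2 : Phi 2 = 1 := by
      unfold Phi
      norm_num [Real.Gamma_two]
    have h3 : Phi 3 ≤ 1 := Phi_le_one 2 (by norm_num)
    norm_num [h2]
    exact h3
  · have hn2 : 2 ≤ n := h2
    rw [Phi_eq n hn, Phi_eq (n+1) (by omega), Real.exp_le_exp]
    exact key n hn2
end
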